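/- Let B₁, …, Bₙ be C*-subalgebras of a C*-algebra A with Bᵢ · Bⱼ ⊆ B_{max{i,j}} for all i, j, and with B₁ + B₂ + ⋯ + Bₙ = A. Then for any positive element a ∈ A there exist bᵢ ∈ Bᵢ (i = 1, …, n) with a = b₁ + ⋯ + bₙ and such that b₁ + ⋯ + b_k ≥ 0 for every 1 ≤ k ≤ n. -/

import Mathlib

open scoped ComplexOrder

private lemma filter_lt_succ_eq_insert {n m : ℕ} (hm : m < n) :
    (Finset.univ.filter (fun i : Fin n => (i : ℕ) < m + 1)) =
      insert ⟨m, hm⟩ (Finset.univ.filter (fun i : Fin n => (i : ℕ) < m)) := by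
  ext i
  simp [Nat.lt_succ_iff_lt_or_eq, Fin.ext_iff, or_comm]
  constructor <;> intro h <;> omega

/-- **Positive decomposition along a filtered family of C*-subalgebras.**
Let `B₁, …, Bₙ` be C*-subalgebras of a C*-algebra `A` with `Bᵢ · Bⱼ ⊆ B_{max{i,j}}`
for all `i, j`, and with `B₁ + ⋯ + Bₙ = A`.  Then for any positive element `a ∈ A`
there exist `bᵢ ∈ Bᵢ` with `a = b₁ + ⋯ + bₙ` and all partial sums `b₁ + ⋯ + b_k`
positive. -/
theorem positive_decomposition_filtered_subalgebras
    {A : Type*} [NonUnitalCStarAlgebra A] [PartialOrder A] [StarOrderedRing A] {n : ℕ}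
    (B : Fin n → NonUnitalStarSubalgebra ℂ A)
    (hBclosed : ∀ i, IsClosed (B i : Set A))
    (hBmul : ∀ i j : Fin n, ∀ x ∈ B i, ∀ y ∈ B j, x * y ∈ B (max i j))
    (hsum : ∀ a : A, ∃ b : Fin n → A, (∀ i, b i ∈ B i) ∧ a = ∑ i, b i)
    (a : A) (ha : 0 ≤ a) :
    ∃ b : Fin n → A, (∀ i, b i ∈ B i) ∧ a = ∑ i, b i ∧
      ∀ k : Fin n, 0 ≤ ∑ i ∈ Finset.univ.filter (· ≤ k), b i := by
  -- Write `a = star x * x` with `x = √a`.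
  set x : A := CFC.sqrt a with hx
  have hxa : star x * x = a := by
    rw [(IsSelfAdjoint.of_nonneg (CFC.sqrt_nonneg a) : IsSelfAdjoint x)]
    exact CFC.sqrt_mul_sqrt_self a ha
  obtain ⟨c, hc, hxc⟩ := hsum x
  -- partial sums of the `c i`
  set S : ℕ → A := fun m => ∑ i ∈ Finset.univ.filter (fun i : Fin n => (i : ℕ) < m), c i
    with hS
  have hS0 : S 0 = 0 := by simp [hS]
  have hSsucc : ∀ {m : ℕ} (hm : m < n), S (m + 1) = S m + c ⟨m, hm⟩ := by
    intro m hm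
    rw [hS]
    simp only
    rw [filter_lt_succ_eq_insert hm, Finset.sum_insert (by simp), add_comm]
  have hSn : S n = x := by
    rw [hS, hxc]
    simp only
    rw [Finset.filter_true_of_mem (fun i _ => i.isLt)]
  -- multiplying a partial sum (or its star) against an element of a later algebra stays there
  have hmax : ∀ {i j : Fin n}, (i : ℕ) ≤ (j : ℕ) → ∀ u ∈ B i, ∀ y ∈ B j, u * y ∈ B j := by
    intro i j hij u hu y hy
    have := hBmul i j u hu y hy
    rwa [max_eq_right (by exact_mod_cast hij)] at this
  have hmax' : ∀ {i j : Fin n}, (i : ℕ) ≤ (j : ℕ) → ∀ u ∈ B i, ∀ y ∈ B j, y * u ∈ B j := by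
    intro i j hij u hu y hy
    have := hBmul j i y hy u hu
    rwa [max_eq_left (by exact_mod_cast hij)] at this
  have hSmemL : ∀ (m : ℕ) (j : Fin n), m ≤ (j : ℕ) → ∀ y ∈ B j, star (S m) * y ∈ B j := by
    intro m j hmj y hy
    rw [hS]
    simp only [star_sum, Finset.sum_mul]
    refine sum_mem fun i hi => ?_
    have hij : (i : ℕ) ≤ (j : ℕ) := le_of_lt (lt_of_lt_of_le (Finset.mem_filter.1 hi).2 hmj)
    exact hmax hij _ (star_mem (hc i)) y hy
  have hSmemR : ∀ (m : ℕ) (j : Fin n), m ≤ (j : ℕ) → ∀ y ∈ B j, y * S m ∈ B j := by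
    intro m j hmj y hy
    rw [hS]
    simp only [Finset.mul_sum]
    refine sum_mem fun i hi => ?_
    have hij : (i : ℕ) ≤ (j : ℕ) := le_of_lt (lt_of_lt_of_le (Finset.mem_filter.1 hi).2 hmj)
    exact hmax' hij _ (hc i) y hy
  -- the decomposition
  refine ⟨fun k => star (S (k + 1)) * S (k + 1) - star (S k) * S k, ?_, ?_, ?_⟩
  · -- membership
    intro k
    obtain ⟨m, hm⟩ := k
    have hck : c ⟨m, hm⟩ ∈ B ⟨m, hm⟩ := hc _
    have : star (S (m + 1)) * S (m + 1) - star (S m) * S m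
        = star (S m) * c ⟨m, hm⟩ + star (c ⟨m, hm⟩) * S m + star (c ⟨m, hm⟩) * c ⟨m, hm⟩ := by
      rw [hSsucc hm, star_add]
      noncomm_ring
    show star (S (m + 1)) * S (m + 1) - star (S m) * S m ∈ B ⟨m, hm⟩
    rw [this]
    refine add_mem (add_mem ?_ ?_) ?_
    · exact hSmemL m _ le_rfl _ hck
    · exact hSmemR m _ le_rfl _ (star_mem hck)
    · have := hBmul ⟨m, hm⟩ ⟨m, hm⟩ _ (star_mem hck) _ hck
      rwa [max_self] at this
  · -- total sum
    have key : ∀ m : ℕ, m ≤ n →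
        ∑ i ∈ Finset.univ.filter (fun i : Fin n => (i : ℕ) < m),
          (star (S (i + 1)) * S (i + 1) - star (S i) * S i) = star (S m) * S m := by
      intro m
      induction m with
      | zero => intro _; simp [hS0]
      | succ m ih =>
        intro hmn
        have hm : m < n := hmn
        rw [filter_lt_succ_eq_insert hm, Finset.sum_insert (by simp), ih (le_of_lt hm)]
        abel
    rw [← hxa, ← hSn, ← key n le_rfl]
    congr 1
    rw [Finset.filter_true_of_mem (fun i _ => i.isLt)]
  · -- partial sums positive
    intro k
    have hfil : (Finset.univ.filter (· ≤ k)) =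
        Finset.univ.filter (fun i : Fin n => (i : ℕ) < (k : ℕ) + 1) := by
      ext i
      simp only [Finset.mem_filter, Finset.mem_univ, true_and, Nat.lt_succ_iff, Fin.le_def]
    have key : ∀ m : ℕ, m ≤ n →
        ∑ i ∈ Finset.univ.filter (fun i : Fin n => (i : ℕ) < m),
          (star (S (i + 1)) * S (i + 1) - star (S i) * S i) = star (S m) * S m := by
      intro m
      induction m with
      | zero => intro _; simp [hS0]
      | succ m ih =>
        intro hmn
        have hm : m < n := hmn
        rw [filter_lt_succ_eq_insert hm, Finset.sum_insert (by simp), ih (le_of_lt hm)]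
        abel
    rw [hfil, key ((k : ℕ) + 1) k.isLt]
    exact star_mul_self_nonneg _
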